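/- For the multicalibration boosting dynamics with unit rescaling weights, assume the projector map is Lipschitz along the trajectory: ‖A(f_t) − A(f_{t−1})‖₂ ≤ L_A ‖f_t − f_{t−1}‖₂ for all t ≥ 1, where L_A ≥ 0. Let κ = 1 − η + η L_A ‖y − f₀‖₂. Then for every t ≥ 1, ‖f_{t+1} − f_t‖₂ ≤ κ ‖f_t − f_{t−1}‖₂. -/

import Mathlib

open Matrix
open scoped Matrix.Norms.L2Operator

/-- The action of a real matrix on vectors of `EuclideanSpace`. -/
noncomputable def mulVecE {m n : Type*} [Fintype m] [Fintype n] [DecidableEq n]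
    (A : Matrix m n ℝ) (v : EuclideanSpace ℝ n) : EuclideanSpace ℝ m :=
  Matrix.toEuclideanLin A v

section aux
variable {n : ℕ}

lemma mulVecE_norm_le (M : Matrix (Fin n) (Fin n) ℝ) (v : EuclideanSpace ℝ (Fin n)) :
    ‖mulVecE M v‖ ≤ ‖M‖ * ‖v‖ := by
  have h := Matrix.l2_opNorm_mulVec M v
  simpa [mulVecE, Matrix.toEuclideanLin_apply, EuclideanSpace.equiv] using h

lemma mulVecE_mulVecE (M N : Matrix (Fin n) (Fin n) ℝ) (v : EuclideanSpace ℝ (Fin n)) :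
    mulVecE M (mulVecE N v) = mulVecE (M * N) v := by
  simp [mulVecE, Matrix.toEuclideanLin_apply, Matrix.mulVec_mulVec]

lemma mulVecE_sub_left (M N : Matrix (Fin n) (Fin n) ℝ) (v : EuclideanSpace ℝ (Fin n)) :
    mulVecE (M - N) v = mulVecE M v - mulVecE N v := by
  simp [mulVecE, map_sub]

lemma mulVecE_sub (M : Matrix (Fin n) (Fin n) ℝ) (v w : EuclideanSpace ℝ (Fin n)) :
    mulVecE M (v - w) = mulVecE M v - mulVecE M w := by
  simp [mulVecE, map_sub]

lemma mulVecE_smul (M : Matrix (Fin n) (Fin n) ℝ) (c : ℝ) (v : EuclideanSpace ℝ (Fin n)) :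
    mulVecE M (c • v) = c • mulVecE M v := by
  simp [mulVecE, _root_.map_smul]

/-- Contraction for `x ↦ x - η • P x` when `P` is an orthogonal projection. -/
lemma proj_contract (M : Matrix (Fin n) (Fin n) ℝ) (hsymm : Mᵀ = M) (hproj : M * M = M)
    (η : ℝ) (hη0 : 0 ≤ η) (hη1 : η ≤ 1) (x : EuclideanSpace ℝ (Fin n)) :
    ‖x - η • mulVecE M x‖ ≤ ‖x‖ := by
  have hherm : M.IsHermitian := by
    simpa [Matrix.IsHermitian] using congrArg id hsymm
  have hsym : (Matrix.toEuclideanLin M).IsSymmetric :=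
    Matrix.isHermitian_iff_isSymmetric.mp hherm
  set u : EuclideanSpace ℝ (Fin n) := mulVecE M x with hu
  set v : EuclideanSpace ℝ (Fin n) := x - u with hv
  have hPv : mulVecE M v = 0 := by
    rw [hv, mulVecE_sub, hu, mulVecE_mulVecE, hproj, sub_self]
  have hinner : inner ℝ u v = (0 : ℝ) := by
    have := hsym x v
    simp only [mulVecE] at hu hPv ⊢
    rw [hu, this, hPv, inner_zero_right]
  have hinner' : inner ℝ v ((1 - η) • u) = (0 : ℝ) := by
    rw [real_inner_smul_right, real_inner_comm, hinner, mul_zero]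
  have hsplit : x - η • u = v + (1 - η) • u := by
    rw [hv]; module
  have hxsplit : x = v + u := by rw [hv]; abel
  have h1 : ‖x - η • u‖ ^ 2 = ‖v‖ ^ 2 + (1 - η) ^ 2 * ‖u‖ ^ 2 := by
    rw [hsplit, norm_add_sq_real, hinner', norm_smul, Real.norm_eq_abs, mul_pow, sq_abs]
    ring
  have h2 : ‖x‖ ^ 2 = ‖v‖ ^ 2 + ‖u‖ ^ 2 := by
    rw [hxsplit, norm_add_sq_real, real_inner_comm, hinner]
    ring
  have hle : ‖x - η • u‖ ^ 2 ≤ ‖x‖ ^ 2 := by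
    rw [h1, h2]
    nlinarith [mul_nonneg (mul_nonneg hη0 (by linarith : (0:ℝ) ≤ 2 - η)) (sq_nonneg ‖u‖)]
  nlinarith [norm_nonneg (x - η • u), norm_nonneg x]

end aux

theorem multicalibration_boosting_linear_rate
    {n : ℕ} (y : EuclideanSpace ℝ (Fin n)) (η : ℝ) (hη0 : 0 < η) (hη1 : η ≤ 1)
    (A : EuclideanSpace ℝ (Fin n) → Matrix (Fin n) (Fin n) ℝ)
    (hAsymm : ∀ f, (A f)ᵀ = A f) (hAproj : ∀ f, A f * A f = A f)
    (f : ℕ → EuclideanSpace ℝ (Fin n))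
    (hf : ∀ t, f (t + 1) = f t + η • mulVecE (A (f t)) (y - f t))
    (L_A : ℝ) (hLA : 0 ≤ L_A)
    (hLip : ∀ t : ℕ, ‖A (f (t + 1)) - A (f t)‖ ≤ L_A * ‖f (t + 1) - f t‖) :
    ∀ t : ℕ,
      ‖f (t + 2) - f (t + 1)‖ ≤
        (1 - η + η * L_A * ‖y - f 0‖) * ‖f (t + 1) - f t‖ := by
  intro t
  -- residual recursion
  have hg : ∀ s : ℕ, y - f (s + 1) = (y - f s) - η • mulVecE (A (f s)) (y - f s) := by
    intro s; rw [hf s]; abel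
  have hmono : ∀ s : ℕ, ‖y - f s‖ ≤ ‖y - f 0‖ := by
    intro s
    induction s with
    | zero => exact le_refl _
    | succ k ih =>
      calc ‖y - f (k + 1)‖ = ‖(y - f k) - η • mulVecE (A (f k)) (y - f k)‖ := by rw [hg k]
        _ ≤ ‖y - f k‖ := proj_contract _ (hAsymm _) (hAproj _) η hη0.le hη1 _
        _ ≤ ‖y - f 0‖ := ih
  have hstep : ∀ s : ℕ, f (s + 1) - f s = η • mulVecE (A (f s)) (y - f s) := by
    intro s; rw [hf s]; abel
  -- key algebraic identity
  have hPt : mulVecE (A (f t)) (y - f (t + 1)) = (1 - η) • mulVecE (A (f t)) (y - f t) := by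
    rw [hg t, mulVecE_sub, mulVecE_smul, mulVecE_mulVecE, hAproj]
    module
  have key : f (t + 2) - f (t + 1)
      = (1 - η) • (f (t + 1) - f t)
        + η • mulVecE (A (f (t + 1)) - A (f t)) (y - f (t + 1)) := by
    rw [mulVecE_sub_left, hstep (t + 1), hstep t, hPt]
    module
  have hnorm1 : ‖mulVecE (A (f (t + 1)) - A (f t)) (y - f (t + 1))‖
      ≤ L_A * ‖f (t + 1) - f t‖ * ‖y - f 0‖ := by
    calc ‖mulVecE (A (f (t + 1)) - A (f t)) (y - f (t + 1))‖
        ≤ ‖A (f (t + 1)) - A (f t)‖ * ‖y - f (t + 1)‖ := mulVecE_norm_le _ _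
      _ ≤ (L_A * ‖f (t + 1) - f t‖) * ‖y - f 0‖ := by
          apply mul_le_mul (hLip t) (hmono (t + 1)) (norm_nonneg _)
          positivity
  calc ‖f (t + 2) - f (t + 1)‖
      ≤ ‖(1 - η) • (f (t + 1) - f t)‖
        + ‖η • mulVecE (A (f (t + 1)) - A (f t)) (y - f (t + 1))‖ := by
        rw [key]; exact norm_add_le _ _
    _ ≤ (1 - η) * ‖f (t + 1) - f t‖ + η * (L_A * ‖f (t + 1) - f t‖ * ‖y - f 0‖) := by
        rw [norm_smul, norm_smul, Real.norm_eq_abs, Real.norm_eq_abs,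
          abs_of_nonneg (by linarith), abs_of_nonneg hη0.le]
        have := mul_le_mul_of_nonneg_left hnorm1 hη0.le
        linarith
    _ = (1 - η + η * L_A * ‖y - f 0‖) * ‖f (t + 1) - f t‖ := by ring
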